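/- arXiv:1506.08243 — 5 statements merged into one kernel-verified Lean document; each statement's English description precedes it below -/
import Mathlib

section
/- Let A be an m×n real matrix all of whose entries lie in {-1, 0, +1}. Then the following are equivalent: (i) for all integral vectors a, b ∈ ℤ^m and c, d ∈ ℤ^n, every extreme point of the polyhedron {x ∈ ℝ^n : c ≤ x ≤ d (componentwise), a ≤ Ax ≤ b (componentwise)} has all integer coordinates; (ii) for each nonempty collection C of columns of A there exist two disjoint subsets C₁ and C₂ with C₁ ∪ C₂ = C such that the sum of the columns in C₁ minus the sum of the columns in C₂ is a vector all of whose entries lie in {-1, 0, +1}. -/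
open Matrix Finset

/-- Ghouila-Houri property for columns of an integer matrix. -/
def GHcol {R : Type*} {N : ℕ} (B : Matrix R (Fin N) ℤ) : Prop :=
  ∀ C : Finset (Fin N), C.Nonempty →
    ∃ C₁ C₂ : Finset (Fin N), C₁ ∪ C₂ = C ∧ Disjoint C₁ C₂ ∧
      ∀ i, ((∑ j ∈ C₁, B i j) - (∑ j ∈ C₂, B i j) = -1 ∨
            (∑ j ∈ C₁, B i j) - (∑ j ∈ C₂, B i j) = 0 ∨
            (∑ j ∈ C₁, B i j) - (∑ j ∈ C₂, B i j) = 1)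

/-- Ghouila-Houri implies all square submatrices have determinant in {-1,0,1}. -/
theorem GHcol.det_submatrix {R : Type*} {N : ℕ} (B : Matrix R (Fin N) ℤ)
    (hB : ∀ i j, B i j = -1 ∨ B i j = 0 ∨ B i j = 1) (hGH : GHcol B) :
    ∀ k (f : Fin k → R) (g : Fin k → Fin N), Function.Injective g →
      (B.submatrix f g).det = -1 ∨ (B.submatrix f g).det = 0 ∨ (B.submatrix f g).det = 1 := by
  intro k
  induction k with
  | zero => intro f g hg; right; right; simp [Matrix.det_fin_zero]
  | succ k ih =>
    intro f g hg
    set D := (B.submatrix f g) with hD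
    by_cases hd : D.det = 0
    · right; left; exact hd
    -- adjugate entries are in {-1,0,1}
    have hadj : ∀ i j, D.adjugate i j = -1 ∨ D.adjugate i j = 0 ∨ D.adjugate i j = 1 := by
      intro i j
      rw [Matrix.adjugate_fin_succ_eq_det_submatrix]
      have := ih (f ∘ j.succAbove) (g ∘ i.succAbove)
        (hg.comp (Fin.succAbove_right_injective))
      have hsub : D.submatrix j.succAbove i.succAbove
          = B.submatrix (f ∘ j.succAbove) (g ∘ i.succAbove) := by
        rw [hD, Matrix.submatrix_submatrix]
      rw [hsub]
      rcases neg_one_pow_eq_or ℤ ((j:ℕ)+(i:ℕ)) with hs | hs <;>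
        rcases this with h | h | h <;> rw [hs, h] <;> norm_num
    -- b' : the first column of the adjugate
    set b' : Fin (k+1) → ℤ := fun j => D.adjugate j 0 with hb'
    have hDb' : D.mulVec b' = fun i => if i = 0 then D.det else 0 := by
      funext i
      have h1 : D.mulVec b' i = (D * D.adjugate) i 0 := by
        simp [Matrix.mulVec, Matrix.mul_apply, dotProduct, hb']
      rw [h1, Matrix.mul_adjugate]
      simp [Matrix.one_apply]
    have hb'ne : b' ≠ 0 := by
      intro h0
      have := congrFun hDb' 0
      rw [h0] at this
      simp [Matrix.mulVec] at this
      exact hd this.symm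
    -- the column set
    set Csupp : Finset (Fin (k+1)) := Finset.univ.filter (fun j => b' j ≠ 0) with hCsupp
    have hCsne : Csupp.Nonempty := by
      rcases Function.ne_iff.mp hb'ne with ⟨j, hj⟩
      exact ⟨j, by simp [hCsupp]; exact hj⟩
    set C : Finset (Fin N) := Csupp.image g with hC
    obtain ⟨C₁, C₂, hunion, hdisj, hsums⟩ := hGH C (hCsne.image g)
    -- the signed indicator vector
    set y : Fin (k+1) → ℤ := fun j => if g j ∈ C₁ then 1 else if g j ∈ C₂ then -1 else 0 with hy
    -- membership transfer
    have hC1sub : C₁ ⊆ C := hunion ▸ Finset.subset_union_left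
    have hC2sub : C₂ ⊆ C := hunion ▸ Finset.subset_union_right
    -- mulVec y in terms of sums over C₁, C₂
    have hDy : ∀ i, D.mulVec y i = (∑ c ∈ C₁, B (f i) c) - (∑ c ∈ C₂, B (f i) c) := by
      intro i
      have e1 : C₁ = Finset.image g (Finset.univ.filter (fun j => g j ∈ C₁)) := by
        apply Finset.ext
        intro c
        simp only [Finset.mem_image, Finset.mem_filter, Finset.mem_univ, true_and]
        constructor
        · intro hc
          obtain ⟨j, _, hj⟩ := Finset.mem_image.mp (hC1sub hc)
          exact ⟨j, hj ▸ hc, hj⟩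
        · rintro ⟨j, hj, rfl⟩; exact hj
      have e2 : C₂ = Finset.image g (Finset.univ.filter (fun j => g j ∈ C₂)) := by
        apply Finset.ext
        intro c
        simp only [Finset.mem_image, Finset.mem_filter, Finset.mem_univ, true_and]
        constructor
        · intro hc
          obtain ⟨j, _, hj⟩ := Finset.mem_image.mp (hC2sub hc)
          exact ⟨j, hj ▸ hc, hj⟩
        · rintro ⟨j, hj, rfl⟩; exact hj
      rw [e1, e2, Finset.sum_image (fun a _ b _ h => hg h),
        Finset.sum_image (fun a _ b _ h => hg h)]
      rw [Matrix.mulVec, dotProduct]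
      rw [← Finset.sum_filter_add_sum_filter_not Finset.univ (fun j => g j ∈ C₁)
        (fun j => D i j * y j)]
      have hd1 : ∀ j ∈ Finset.univ.filter (fun j => g j ∈ C₁), D i j * y j = B (f i) (g j) := by
        intro j hj
        simp only [Finset.mem_filter] at hj
        simp [hy, hj.2, hD]
      have hd2 : ∀ j ∈ Finset.univ.filter (fun j => ¬ g j ∈ C₁), D i j * y j
          = if g j ∈ C₂ then -B (f i) (g j) else 0 := by
        intro j hj
        simp only [Finset.mem_filter] at hj
        by_cases h2 : g j ∈ C₂ <;> simp [hy, hj.2, h2, hD]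
      rw [Finset.sum_congr rfl hd1, Finset.sum_congr rfl hd2]
      rw [Finset.sum_ite, Finset.sum_const_zero, add_zero, Finset.filter_filter]
      rw [Finset.sum_neg_distrib]
      have : Finset.univ.filter (fun j => ¬ g j ∈ C₁ ∧ g j ∈ C₂)
          = Finset.univ.filter (fun j => g j ∈ C₂) := by
        apply Finset.filter_congr
        intro j _
        constructor
        · exact fun h => h.2
        · intro h2
          exact ⟨fun h1 => (Finset.disjoint_left.mp hdisj h1) h2, h2⟩
      rw [this]
      ring
    -- parity: y ≡ b' mod 2
    have hpar : ∀ j, 2 ∣ (y j - b' j) := by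
      intro j
      by_cases hbj : b' j = 0
      · have hyj : y j = 0 := by
          have hnotC : g j ∉ C := by
            intro hgj
            obtain ⟨j', hj', hjj'⟩ := Finset.mem_image.mp hgj
            rw [hg hjj'] at hj'
            simp [hCsupp] at hj'
            exact hj' hbj
          have h1 : g j ∉ C₁ := fun h => hnotC (hC1sub h)
          have h2 : g j ∉ C₂ := fun h => hnotC (hC2sub h)
          simp [hy, h1, h2]
        rw [hyj, hbj]; exact Dvd.intro 0 rfl
      · have hjC : g j ∈ C := Finset.mem_image_of_mem g (by simp [hCsupp]; exact hbj)
        have h12 : g j ∈ C₁ ∨ g j ∈ C₂ := by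
          rw [← Finset.mem_union, hunion]; exact hjC
        have hbj' : b' j = -1 ∨ b' j = 1 := by
          rcases hadj j 0 with h | h | h
          · left; exact h
          · exact absurd h hbj
          · right; exact h
        rcases h12 with h1 | h2
        · have : y j = 1 := by simp [hy, h1]
          rcases hbj' with h | h <;> rw [this, h] <;> decide
        · have h1 : g j ∉ C₁ := fun h => (Finset.disjoint_left.mp hdisj h) h2
          have : y j = -1 := by simp [hy, h1, h2]
          rcases hbj' with h | h <;> rw [this, h] <;> decide
    -- mulVec y vanishes off 0
    have hzero : ∀ i, i ≠ 0 → D.mulVec y i = 0 := by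
      intro i hi
      have heven : 2 ∣ D.mulVec y i := by
        have : D.mulVec y i - D.mulVec b' i = ∑ j, D i j * (y j - b' j) := by
          simp [Matrix.mulVec, dotProduct, ← Finset.sum_sub_distrib, mul_sub]
        have hmb : D.mulVec b' i = 0 := by rw [hDb']; simp [hi]
        rw [hmb, sub_zero] at this
        rw [this]
        exact Finset.dvd_sum (fun j _ => Dvd.dvd.mul_left (hpar j) _)
      have hval := hsums (f i)
      rw [← hDy i] at hval
      omega
    -- y is nonzero
    obtain ⟨j₀, hj₀⟩ := hCsne
    have hbj₀ : b' j₀ ≠ 0 := by simpa [hCsupp] using hj₀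
    have hyj₀ : y j₀ = 1 ∨ y j₀ = -1 := by
      have hjC : g j₀ ∈ C := Finset.mem_image_of_mem g hj₀
      have h12 : g j₀ ∈ C₁ ∨ g j₀ ∈ C₂ := by
        rw [← Finset.mem_union, hunion]; exact hjC
      rcases h12 with h1 | h2
      · left; simp [hy, h1]
      · right
        have h1 : g j₀ ∉ C₁ := fun h => (Finset.disjoint_left.mp hdisj h) h2
        simp [hy, h1, h2]
    -- det • v = adjugate * (D * v)
    have hcram : ∀ v : Fin (k+1) → ℤ, ∀ j, D.det * v j = D.adjugate.mulVec (D.mulVec v) j := by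
      intro v j
      rw [Matrix.mulVec_mulVec, Matrix.adjugate_mul, Matrix.smul_mulVec,
        Matrix.one_mulVec]
      rfl
    -- epsilon
    have hε := hsums (f 0)
    rw [← hDy 0] at hε
    have hεne : D.mulVec y 0 ≠ 0 := by
      intro h0
      have hall : D.mulVec y = 0 := by
        funext i
        by_cases hi : i = 0
        · rw [hi, h0]; rfl
        · rw [hzero i hi]; rfl
      have := hcram y j₀
      rw [hall] at this
      simp [Matrix.mulVec_zero] at this
      rcases this with h | h
      · exact hd h
      · rcases hyj₀ with hy1 | hy1 <;> rw [hy1] at h <;> simp at h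
    -- compute det * y j₀ = ε * b' j₀
    have hkey : D.det * y j₀ = D.mulVec y 0 * b' j₀ := by
      rw [hcram y j₀]
      show ∑ i, D.adjugate j₀ i * (D.mulVec y) i = _
      rw [Finset.sum_eq_single 0]
      · rw [mul_comm]
      · intro i _ hi; rw [hzero i hi, mul_zero]
      · intro h; simp at h
    have hb'01 : b' j₀ = -1 ∨ b' j₀ = 1 := by
      rcases hadj j₀ 0 with h | h | h
      · left; exact h
      · exact absurd h hbj₀
      · right; exact h
    rcases hε with h | h | h <;> rcases hyj₀ with h1 | h1 <;> rcases hb'01 with h2 | h2 <;>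
      rw [h, h1, h2] at hkey <;> omega


open Matrix Finset


variable {m n : ℕ}

/-- The extension of `Z` by identity rows. -/
def ZExt (Z : Matrix (Fin m) (Fin n) ℤ) : Matrix (Fin m ⊕ Fin n) (Fin n) ℤ :=
  Matrix.of fun r j => Sum.elim (fun i => Z i j) (fun j' => if j' = j then 1 else 0) r

theorem vertex_integral (Z : Matrix (Fin m) (Fin n) ℤ)
    (hdetE : ∀ (f : Fin n → Fin m ⊕ Fin n),
      ((ZExt Z).submatrix f id).det = -1 ∨ ((ZExt Z).submatrix f id).det = 0 ∨
        ((ZExt Z).submatrix f id).det = 1)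
    (a b : Fin m → ℤ) (c d : Fin n → ℤ) (x : Fin n → ℝ)
    (hx : x ∈ Set.extremePoints ℝ {x : Fin n → ℝ |
            (∀ j, (c j : ℝ) ≤ x j ∧ x j ≤ (d j : ℝ)) ∧
            (∀ i, (a i : ℝ) ≤ (Z.map (Int.cast : ℤ → ℝ)).mulVec x i ∧
              (Z.map (Int.cast : ℤ → ℝ)).mulVec x i ≤ (b i : ℝ))}) :
    ∀ j, ∃ z : ℤ, x j = (z : ℝ) := by
  classical
  set A := Z.map (Int.cast : ℤ → ℝ) with hAdef
  set P : Set (Fin n → ℝ) := {x : Fin n → ℝ |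
            (∀ j, (c j : ℝ) ≤ x j ∧ x j ≤ (d j : ℝ)) ∧
            (∀ i, (a i : ℝ) ≤ A.mulVec x i ∧ A.mulVec x i ≤ (b i : ℝ))} with hPdef
  obtain ⟨hxP, hext⟩ := hx
  -- tightness predicate
  set tight : Fin m ⊕ Fin n → Prop :=
    fun r => Sum.elim (fun i => A.mulVec x i = a i ∨ A.mulVec x i = b i)
      (fun j => x j = c j ∨ x j = d j) r with htight
  -- rows of the extended matrix, over ℝ
  set Erow : (Fin m ⊕ Fin n) → (Fin n → ℝ) := fun r j => ((ZExt Z) r j : ℝ) with hErow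
  have hErow_dot : ∀ r (y : Fin n → ℝ), Erow r ⬝ᵥ y =
      Sum.elim (fun i => A.mulVec y i) (fun j => y j) r := by
    intro r y
    cases r with
    | inl i => simp [hErow, ZExt, dotProduct, Matrix.mulVec, hAdef, Matrix.map_apply]
    | inr j =>
      simp [hErow, ZExt, dotProduct]
  -- the span of tight rows is everything
  have hspan : Submodule.span ℝ (Erow '' {r | tight r}) = ⊤ := by
    by_contra hne
    -- matrix of tight rows (others zeroed)
    set M' : Matrix (Fin m ⊕ Fin n) (Fin n) ℝ :=
      fun r j => if tight r then Erow r j else 0 with hM'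
    have hspan_eq : Submodule.span ℝ (Set.range M') = Submodule.span ℝ (Erow '' {r | tight r}) := by
      apply le_antisymm
      · rw [Submodule.span_le]
        rintro v ⟨r, rfl⟩
        by_cases h : tight r
        · apply Submodule.subset_span
          refine ⟨r, h, ?_⟩
          funext j; simp [hM', h]
        · have : M' r = 0 := by funext j; simp [hM', h]
          rw [this]; exact Submodule.zero_mem _
      · rw [Submodule.span_le]
        rintro v ⟨r, hr, rfl⟩
        apply Submodule.subset_span
        refine ⟨r, ?_⟩
        have hr' : tight r := hr
        funext j; simp [hM', hr']
    -- rank is less than n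
    have hrank : M'.rank < n := by
      rw [Matrix.rank_eq_finrank_span_row, Matrix.row, hspan_eq]
      have : Submodule.span ℝ (Erow '' {r | tight r}) < ⊤ := lt_top_iff_ne_top.mpr hne
      have := Submodule.finrank_lt (K := ℝ) (V := Fin n → ℝ) this.ne
      simpa [Module.finrank_pi] using this
    -- kernel is nontrivial
    have hker : ∃ y : Fin n → ℝ, y ≠ 0 ∧ M'.mulVec y = 0 := by
      have h1 := LinearMap.finrank_range_add_finrank_ker M'.mulVecLin
      have h2 : Module.finrank ℝ (Fin n → ℝ) = n := by simp [Module.finrank_pi]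
      rw [h2] at h1
      have hkerne : LinearMap.ker M'.mulVecLin ≠ ⊥ := by
        intro hbot
        rw [hbot] at h1
        simp only [finrank_bot, add_zero] at h1
        rw [show Module.finrank ℝ ↥(LinearMap.range M'.mulVecLin) = M'.rank from rfl] at h1
        omega
      obtain ⟨y, hy, hyne⟩ := Submodule.exists_mem_ne_zero_of_ne_bot hkerne
      exact ⟨y, hyne, hy⟩
    obtain ⟨y, hyne, hy0⟩ := hker
    -- tight rows are orthogonal to y
    have horth : ∀ r, tight r → Erow r ⬝ᵥ y = 0 := by
      intro r hr
      have := congrFun hy0 r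
      simpa [Matrix.mulVec, hM', dotProduct, hr] using this
    -- perturbation stays in P for small t
    have hmem : ∀ᶠ t in nhds (0:ℝ), (x + t • y) ∈ P := by
      have h1 : ∀ j : Fin n, ∀ᶠ t in nhds (0:ℝ),
          (c j:ℝ) ≤ (x + t • y) j ∧ (x + t • y) j ≤ d j := by
        intro j
        have happ : ∀ t : ℝ, (x + t • y) j = x j + t * y j := by intro t; simp
        by_cases htj : tight (Sum.inr j)
        · have hyj : y j = 0 := by
            have := horth _ htj
            rwa [hErow_dot] at this
          apply Filter.Eventually.of_forall
          intro t
          rw [happ, hyj, mul_zero, add_zero]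
          exact hxP.1 j
        · have hne1 : ¬(x j = c j ∨ x j = d j) := htj
          push_neg at hne1
          have hstrict : (c j:ℝ) < x j ∧ x j < (d j:ℝ) :=
            ⟨lt_of_le_of_ne (hxP.1 j).1 (Ne.symm hne1.1), lt_of_le_of_ne (hxP.1 j).2 hne1.2⟩
          have hc : ContinuousAt (fun t : ℝ => x j + t * y j) 0 := by fun_prop
          have hmemIoo : (fun t : ℝ => x j + t * y j) 0 ∈ Set.Ioo (c j:ℝ) (d j:ℝ) := by
            simpa using hstrict
          have := hc.eventually_mem (isOpen_Ioo.mem_nhds hmemIoo)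
          filter_upwards [this] with t ht
          rw [happ]
          exact ⟨le_of_lt ht.1, le_of_lt ht.2⟩
      have h2 : ∀ i : Fin m, ∀ᶠ t in nhds (0:ℝ),
          (a i:ℝ) ≤ A.mulVec (x + t • y) i ∧ A.mulVec (x + t • y) i ≤ b i := by
        intro i
        have happ : ∀ t : ℝ, A.mulVec (x + t • y) i = A.mulVec x i + t * A.mulVec y i := by
          intro t
          rw [Matrix.mulVec_add, Matrix.mulVec_smul]
          simp
        by_cases hti : tight (Sum.inl i)
        · have hyi : A.mulVec y i = 0 := by
            have := horth _ hti
            rwa [hErow_dot] at this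
          apply Filter.Eventually.of_forall
          intro t
          rw [happ, hyi, mul_zero, add_zero]
          exact hxP.2 i
        · have hne1 : ¬(A.mulVec x i = a i ∨ A.mulVec x i = b i) := hti
          push_neg at hne1
          have hstrict : (a i:ℝ) < A.mulVec x i ∧ A.mulVec x i < (b i:ℝ) :=
            ⟨lt_of_le_of_ne (hxP.2 i).1 (Ne.symm hne1.1), lt_of_le_of_ne (hxP.2 i).2 hne1.2⟩
          have hc : ContinuousAt (fun t : ℝ => A.mulVec x i + t * A.mulVec y i) 0 := by fun_prop
          have hmemIoo : (fun t : ℝ => A.mulVec x i + t * A.mulVec y i) 0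
              ∈ Set.Ioo (a i:ℝ) (b i:ℝ) := by simpa using hstrict
          have := hc.eventually_mem (isOpen_Ioo.mem_nhds hmemIoo)
          filter_upwards [this] with t ht
          rw [happ]
          exact ⟨le_of_lt ht.1, le_of_lt ht.2⟩
      have := (Filter.eventually_all.mpr h1).and (Filter.eventually_all.mpr h2)
      filter_upwards [this] with t ht
      exact ⟨ht.1, ht.2⟩
    have hpert : ∀ᶠ t in nhds (0:ℝ), (x + t • y) ∈ P ∧ (x - t • y) ∈ P := by
      have hneg : ∀ᶠ t in nhds (0:ℝ), (x + (-t) • y) ∈ P := by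
        have htend : Filter.Tendsto (fun t : ℝ => -t) (nhds 0) (nhds 0) := by
          simpa using (continuous_neg.tendsto (0:ℝ))
        exact htend.eventually hmem
      filter_upwards [hmem, hneg] with t h h'
      refine ⟨h, ?_⟩
      rwa [neg_smul, ← sub_eq_add_neg] at h'
    obtain ⟨ε, hεpos, hε⟩ := Metric.eventually_nhds_iff.mp hpert
    have hdist : dist (ε/2) (0:ℝ) < ε := by
      rw [Real.dist_eq, sub_zero, abs_of_pos (by linarith)]
      linarith
    obtain ⟨hp1, hp2⟩ := hε hdist
    have hseg : x ∈ openSegment ℝ (x + (ε/2) • y) (x - (ε/2) • y) := by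
      refine ⟨1/2, 1/2, by norm_num, by norm_num, by norm_num, ?_⟩
      module
    have hcontra := hext hp1 hp2 hseg
    have h0 : (ε/2) • y = 0 := by
      have := hcontra
      have h' : x + (ε/2) • y = x + 0 := by rw [this, add_zero]
      exact add_left_cancel h'
    rw [smul_eq_zero] at h0
    rcases h0 with h | h
    · have : ε = 0 := by linarith [h]
      exact absurd this (ne_of_gt hεpos)
    · exact hyne h
  -- extract a basis from the tight rows
  obtain ⟨bset, hbsub, hbspan, hbli⟩ := exists_linearIndependent ℝ (Erow '' {r | tight r})
  rw [hspan] at hbspan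
  have hbfin : bset.Finite := hbli.setFinite
  have : Fintype bset := hbfin.fintype
  let B : Module.Basis bset ℝ (Fin n → ℝ) := Module.Basis.mk hbli (by rw [Subtype.range_coe, hbspan])
  have hcard : Fintype.card bset = n := by
    have h1 := Module.finrank_eq_card_basis B
    have h2 : Module.finrank ℝ (Fin n → ℝ) = n := by simp [Module.finrank_pi]
    rw [h2] at h1
    exact h1.symm
  let e : Fin n ≃ bset := (Fintype.equivFinOfCardEq hcard).symm
  have hch : ∀ v : bset, ∃ r, tight r ∧ Erow r = (v : Fin n → ℝ) := by
    intro v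
    obtain ⟨r, hr, hrv⟩ := hbsub v.2
    exact ⟨r, hr, hrv⟩
  choose ρ hρt hρv using hch
  set N : Matrix (Fin n) (Fin n) ℤ := fun i j => ZExt Z (ρ (e i)) j with hN
  set M : Matrix (Fin n) (Fin n) ℝ := N.map (Int.cast : ℤ → ℝ) with hM
  have hMrows : ∀ i, M i = ((e i : Fin n → ℝ)) := by
    intro i
    funext j
    have h1 := congrFun (hρv (e i)) j
    exact h1
  have hli2 : LinearIndependent ℝ (fun i : Fin n => M i) := by
    have h1 := hbli.comp e e.injective
    have h2 : (fun i : Fin n => M i) = fun i => ((e i : Fin n → ℝ)) := funext hMrows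
    rw [h2]
    exact h1
  have hunit : IsUnit M := Matrix.linearIndependent_rows_iff_isUnit.mp hli2
  have hdetne : M.det ≠ 0 := (Matrix.isUnit_iff_isUnit_det M).mp hunit |>.ne_zero
  have hdetcast : M.det = ((N.det : ℤ) : ℝ) := by
    rw [hM]
    exact (RingHom.map_det (Int.castRingHom ℝ) N).symm
  have hdetN : N.det = 1 ∨ N.det = -1 := by
    have hNsub : N = (ZExt Z).submatrix (fun i => ρ (e i)) id := rfl
    rcases (hNsub ▸ hdetE (fun i => ρ (e i)) : N.det = -1 ∨ N.det = 0 ∨ N.det = 1) with h | h | h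
    · right; exact h
    · exfalso; apply hdetne; rw [hdetcast, h]; simp
    · left; exact h
  have hw : ∀ i : Fin n, ∃ z : ℤ, M.mulVec x i = (z : ℝ) := by
    intro i
    have hd : M.mulVec x i = Erow (ρ (e i)) ⬝ᵥ x := by
      show M i ⬝ᵥ x = _
      rw [hMrows i, ← hρv (e i)]
    rw [hd, hErow_dot]
    have htr := hρt (e i)
    rcases hre : ρ (e i) with i' | j'
    · rw [hre] at htr
      rcases htr with h | h
      · exact ⟨a i', by simpa using h⟩
      · exact ⟨b i', by simpa using h⟩
    · rw [hre] at htr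
      rcases htr with h | h
      · exact ⟨c j', by simpa using h⟩
      · exact ⟨d j', by simpa using h⟩
  choose w hwspec using hw
  intro j
  have hcr : M.det * x j = ((N.adjugate.mulVec w j : ℤ) : ℝ) := by
    have h1 : M.adjugate.mulVec (M.mulVec x) j = M.det * x j := by
      rw [Matrix.mulVec_mulVec, Matrix.adjugate_mul, Matrix.smul_mulVec,
        Matrix.one_mulVec]
      rfl
    rw [← h1]
    have h2 : M.mulVec x = fun i => ((w i : ℤ) : ℝ) := funext hwspec
    rw [h2]
    have hadj : M.adjugate = (N.adjugate).map (Int.cast : ℤ → ℝ) := by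
      rw [hM]
      exact (RingHom.map_adjugate (Int.castRingHom ℝ) N).symm
    rw [hadj]
    have h3 : N.adjugate.mulVec w j = ∑ i, N.adjugate j i * w i := rfl
    rw [h3]
    show ∑ i, ((N.adjugate j i : ℤ) : ℝ) * ((w i : ℤ) : ℝ) = _
    push_cast
    rfl
  rcases hdetN with h | h
  · refine ⟨N.adjugate.mulVec w j, ?_⟩
    rw [hdetcast, h] at hcr
    simpa using hcr
  · refine ⟨-(N.adjugate.mulVec w j), ?_⟩
    rw [hdetcast, h] at hcr
    push_cast at hcr ⊢
    linarith



open Matrix Finset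

theorem easy_dir {m n : ℕ} (Z : Matrix (Fin m) (Fin n) ℤ)
    (hvert : ∀ (a b : Fin m → ℤ) (c d : Fin n → ℤ),
        ∀ x ∈ Set.extremePoints ℝ {x : Fin n → ℝ |
            (∀ j, (c j : ℝ) ≤ x j ∧ x j ≤ (d j : ℝ)) ∧
            (∀ i, (a i : ℝ) ≤ (Z.map (Int.cast : ℤ → ℝ)).mulVec x i ∧
              (Z.map (Int.cast : ℤ → ℝ)).mulVec x i ≤ (b i : ℝ))},
          ∀ j, ∃ z : ℤ, x j = (z : ℝ))
    (C : Finset (Fin n)) (hC : C.Nonempty) :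
    ∃ C₁ C₂ : Finset (Fin n), C₁ ∪ C₂ = C ∧ Disjoint C₁ C₂ ∧
      ∀ i, ((∑ j ∈ C₁, Z i j) - (∑ j ∈ C₂, Z i j) = -1 ∨
            (∑ j ∈ C₁, Z i j) - (∑ j ∈ C₂, Z i j) = 0 ∨
            (∑ j ∈ C₁, Z i j) - (∑ j ∈ C₂, Z i j) = 1) := by
  classical
  set A := Z.map (Int.cast : ℤ → ℝ) with hAdef
  set x₀ : Fin n → ℝ := fun j => if j ∈ C then (1/2 : ℝ) else 0 with hx₀def
  set c : Fin n → ℤ := fun _ => 0 with hcdef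
  set d : Fin n → ℤ := fun j => if j ∈ C then 1 else 0 with hddef
  set s : Fin m → ℝ := A.mulVec x₀ with hsdef
  set a : Fin m → ℤ := fun i => ⌊s i⌋ with hadef
  set b : Fin m → ℤ := fun i => ⌈s i⌉ with hbdef
  set P : Set (Fin n → ℝ) := {x : Fin n → ℝ |
            (∀ j, (c j : ℝ) ≤ x j ∧ x j ≤ (d j : ℝ)) ∧
            (∀ i, (a i : ℝ) ≤ A.mulVec x i ∧ A.mulVec x i ≤ (b i : ℝ))} with hPdef
  have hx₀P : x₀ ∈ P := by
    constructor
    · intro j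
      by_cases hj : j ∈ C <;> simp [hx₀def, hcdef, hddef, hj] <;> norm_num
    · intro i
      exact ⟨Int.floor_le (s i), Int.le_ceil (s i)⟩
  -- P is compact
  have hmulVec_cont : ∀ i, Continuous (fun x : Fin n → ℝ => A.mulVec x i) := by
    intro i
    show Continuous (fun x : Fin n → ℝ => ∑ j, A i j * x j)
    exact continuous_finset_sum _ fun j _ => continuous_const.mul (continuous_apply j)
  have hclosed : IsClosed P := by
    have : P = (⋂ j, (fun x : Fin n → ℝ => x j) ⁻¹' Set.Icc (c j : ℝ) (d j : ℝ)) ∩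
        (⋂ i, (fun x : Fin n → ℝ => A.mulVec x i) ⁻¹' Set.Icc (a i : ℝ) (b i : ℝ)) := by
      ext x
      simp [hPdef, Set.mem_iInter, Set.mem_Icc, forall_and]
    rw [this]
    exact (isClosed_iInter fun j => isClosed_Icc.preimage (continuous_apply j)).inter
      (isClosed_iInter fun i => isClosed_Icc.preimage (hmulVec_cont i))
  have hcomp : IsCompact P := by
    have hsub : P ⊆ Set.pi Set.univ (fun j => Set.Icc (c j : ℝ) (d j : ℝ)) := by
      intro x hx j _
      exact ⟨(hx.1 j).1, (hx.1 j).2⟩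
    exact IsCompact.of_isClosed_subset (isCompact_univ_pi fun j => isCompact_Icc) hclosed hsub
  obtain ⟨z, hzext⟩ := hcomp.extremePoints_nonempty ⟨x₀, hx₀P⟩
  have hzP : z ∈ P := hzext.1
  have hz := hvert a b c d z hzext
  -- z is a 0/1 vector supported on C
  have hz01 : ∀ j, (j ∈ C → z j = 0 ∨ z j = 1) ∧ (j ∉ C → z j = 0) := by
    intro j
    obtain ⟨k, hk⟩ := hz j
    obtain ⟨h1, h2⟩ := hzP.1 j
    constructor
    · intro hj
      rw [hcdef] at h1
      rw [hddef] at h2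
      simp [hj] at h1 h2
      rw [hk] at h1 h2 ⊢
      have hk0 : (0:ℤ) ≤ k := by exact_mod_cast h1
      have hk1 : k ≤ 1 := by exact_mod_cast h2
      have : k = 0 ∨ k = 1 := by omega
      rcases this with h | h <;> rw [h] <;> simp [h]
    · intro hj
      rw [hcdef] at h1
      rw [hddef] at h2
      simp [hj] at h1 h2
      linarith
  -- the partition
  set C₁ : Finset (Fin n) := C.filter (fun j => z j = 1) with hC₁
  set C₂ : Finset (Fin n) := C \ C₁ with hC₂
  have hC₁sub : C₁ ⊆ C := Finset.filter_subset _ _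
  refine ⟨C₁, C₂, Finset.union_sdiff_of_subset hC₁sub, Finset.disjoint_sdiff, ?_⟩
  intro i
  -- A.mulVec z i equals the sum over C₁
  have key1 : A.mulVec z i = ∑ j ∈ C₁, A i j := by
    show ∑ j, A i j * z j = _
    rw [← Finset.sum_subset (Finset.subset_univ C₁)]
    · apply Finset.sum_congr rfl
      intro j hj
      rw [hC₁, Finset.mem_filter] at hj
      rw [hj.2, mul_one]
    · intro j _ hj
      have hzj : z j = 0 := by
        by_cases hjC : j ∈ C
        · rcases (hz01 j).1 hjC with h | h
          · exact h
          · exact absurd (Finset.mem_filter.mpr ⟨hjC, h⟩) hj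
        · exact (hz01 j).2 hjC
      rw [hzj, mul_zero]
  -- the doubled fractional point
  have key3 : 2 * s i = ∑ j ∈ C, A i j := by
    rw [hsdef]
    show 2 * ∑ j, A i j * x₀ j = _
    rw [← Finset.sum_subset (Finset.subset_univ C)]
    · rw [Finset.mul_sum]
      apply Finset.sum_congr rfl
      intro j hj
      rw [hx₀def]
      simp [hj]
      ring
    · intro j _ hj
      rw [hx₀def]
      simp [hj]
  -- integer values
  set T : ℤ := ∑ j ∈ C₁, Z i j with hT
  set S : ℤ := ∑ j ∈ C, Z i j with hS
  have hTcast : ((T:ℤ):ℝ) = ∑ j ∈ C₁, A i j := by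
    rw [hT]
    push_cast
    apply Finset.sum_congr rfl
    intro j _
    simp [hAdef, Matrix.map_apply]
  have hScast : ((S:ℤ):ℝ) = ∑ j ∈ C, A i j := by
    rw [hS]
    push_cast
    apply Finset.sum_congr rfl
    intro j _
    simp [hAdef, Matrix.map_apply]
  -- bounds on T
  have hzlo := (hzP.2 i).1
  have hzhi := (hzP.2 i).2
  rw [key1, ← hTcast] at hzlo hzhi
  have hfloor : a i ≤ T := by exact_mod_cast hzlo
  have hceil : T ≤ b i := by exact_mod_cast hzhi
  -- reduce goal to integers
  have hsum2 : ∑ j ∈ C₂, Z i j = S - T := by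
    rw [hC₂, hT, hS, Finset.sum_sdiff_eq_sub hC₁sub]
  rw [hsum2]
  have hgoal : T - (S - T) = 2*T - S := by ring
  rw [hgoal]
  -- case on parity of S
  have h2s : 2 * s i = (S:ℝ) := by rw [key3, hScast]
  rcases Int.even_or_odd S with ⟨q, hq⟩ | ⟨q, hq⟩
  · -- S = 2q, s i = q
    have hsi : s i = (q:ℝ) := by
      rw [hq] at h2s
      push_cast at h2s
      linarith
    have hai : a i = q := by rw [hadef]; simp [hsi]
    have hbi : b i = q := by rw [hbdef]; simp [hsi]
    rw [hai] at hfloor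
    rw [hbi] at hceil
    omega
  · -- S = 2q+1, s i = q + 1/2
    have hsi : s i = (q:ℝ) + 1/2 := by
      rw [hq] at h2s
      push_cast at h2s
      linarith
    have hai : a i = q := by
      rw [hadef]
      rw [Int.floor_eq_iff]
      constructor
      · rw [hsi]; linarith
      · rw [hsi]; push_cast; linarith
    have hbi : b i = q + 1 := by
      rw [hbdef]
      rw [Int.ceil_eq_iff]
      constructor
      · rw [hsi]; push_cast; linarith
      · rw [hsi]; push_cast; linarith
    rw [hai] at hfloor
    rw [hbi] at hceil
    omega

section Glue
variable {m n : ℕ}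

theorem GHcol.ext (Z : Matrix (Fin m) (Fin n) ℤ) (h : GHcol Z) : GHcol (ZExt Z) := by
  intro C hC
  obtain ⟨C₁, C₂, h1, h2, h3⟩ := h C hC
  refine ⟨C₁, C₂, h1, h2, fun r => ?_⟩
  cases r with
  | inl i => simpa [ZExt] using h3 i
  | inr j' =>
    simp only [ZExt, Matrix.of_apply, Sum.elim_inr]
    rw [Finset.sum_ite_eq, Finset.sum_ite_eq]
    by_cases hj1 : j' ∈ C₁ <;> by_cases hj2 : j' ∈ C₂
    · exact absurd hj2 (Finset.disjoint_left.mp h2 hj1)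
    · simp [hj1, hj2]
    · simp [hj1, hj2]
    · simp [hj1, hj2]

theorem ZExt_entries (Z : Matrix (Fin m) (Fin n) ℤ)
    (hZ : ∀ i j, Z i j = -1 ∨ Z i j = 0 ∨ Z i j = 1) :
    ∀ r j, ZExt Z r j = -1 ∨ ZExt Z r j = 0 ∨ ZExt Z r j = 1 := by
  intro r j
  cases r with
  | inl i => exact hZ i j
  | inr j' =>
    simp only [ZExt, Matrix.of_apply, Sum.elim_inr]
    by_cases h : j' = j <;> simp [h]

end Glue

/-- **Schrijver, Theorem 19.3.** Let `A` be an `m × n` real matrix all of whose entries lie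
in `{-1, 0, +1}`. Then: for all integral vectors `a, b ∈ ℤ^m` and `c, d ∈ ℤ^n`, every
extreme point of the polyhedron `{x ∈ ℝ^n : c ≤ x ≤ d, a ≤ Ax ≤ b}` is integral, if and
only if for each nonempty collection `C` of columns of `A` there exist two disjoint subsets
`C₁` and `C₂` with `C₁ ∪ C₂ = C` such that the sum of the columns in `C₁` minus the sum of
the columns in `C₂` is a vector with all entries in `{-1, 0, +1}`. -/
theorem schrijver_19_3 (m n : ℕ) (A : Matrix (Fin m) (Fin n) ℝ)
    (hA : ∀ i j, A i j = -1 ∨ A i j = 0 ∨ A i j = 1) :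
    (∀ (a b : Fin m → ℤ) (c d : Fin n → ℤ),
        ∀ x ∈ Set.extremePoints ℝ {x : Fin n → ℝ |
            (∀ j, (c j : ℝ) ≤ x j ∧ x j ≤ (d j : ℝ)) ∧
            (∀ i, (a i : ℝ) ≤ A.mulVec x i ∧ A.mulVec x i ≤ (b i : ℝ))},
          ∀ j, ∃ z : ℤ, x j = (z : ℝ)) ↔
      (∀ C : Finset (Fin n), C.Nonempty →
        ∃ C₁ C₂ : Finset (Fin n), C₁ ∪ C₂ = C ∧ Disjoint C₁ C₂ ∧
          ∀ i, ((∑ j ∈ C₁, A i j) - (∑ j ∈ C₂, A i j) = -1 ∨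
                (∑ j ∈ C₁, A i j) - (∑ j ∈ C₂, A i j) = 0 ∨
                (∑ j ∈ C₁, A i j) - (∑ j ∈ C₂, A i j) = 1)) := by
  classical
  set Z : Matrix (Fin m) (Fin n) ℤ :=
    fun i j => if A i j = -1 then -1 else if A i j = 1 then 1 else 0 with hZdef
  have hcast : ∀ i j, ((Z i j : ℤ) : ℝ) = A i j := by
    intro i j
    rcases hA i j with h | h | h <;> simp [hZdef, h] <;> norm_num
  have hZ01 : ∀ i j, Z i j = -1 ∨ Z i j = 0 ∨ Z i j = 1 := by
    intro i j
    rcases hA i j with h | h | h <;> simp [hZdef, h] <;> norm_num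
  have hAeq : A = Z.map (Int.cast : ℤ → ℝ) := by
    ext i j
    rw [Matrix.map_apply, hcast]
  have hcs : ∀ (C₁ C₂ : Finset (Fin n)) i,
      (∑ j ∈ C₁, A i j) - (∑ j ∈ C₂, A i j)
        = (((∑ j ∈ C₁, Z i j) - (∑ j ∈ C₂, Z i j) : ℤ) : ℝ) := by
    intro C₁ C₂ i
    push_cast
    rw [Finset.sum_congr rfl (fun j _ => (hcast i j).symm),
      Finset.sum_congr rfl (fun j _ => (hcast i j).symm)]
  constructor
  · intro hvert C hCne
    obtain ⟨C₁, C₂, h1, h2, h3⟩ := easy_dir Z (by rw [← hAeq]; exact hvert) C hCne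
    refine ⟨C₁, C₂, h1, h2, fun i => ?_⟩
    rcases h3 i with h | h | h
    · left; rw [hcs C₁ C₂ i, h]; norm_num
    · right; left; rw [hcs C₁ C₂ i, h]; norm_num
    · right; right; rw [hcs C₁ C₂ i, h]; norm_num
  · intro hGH a b c d x hx
    have hGHZ : GHcol Z := by
      intro C hCne
      obtain ⟨C₁, C₂, h1, h2, h3⟩ := hGH C hCne
      refine ⟨C₁, C₂, h1, h2, fun i => ?_⟩
      rcases h3 i with h | h | h
      · left; rw [hcs C₁ C₂ i] at h; exact_mod_cast h
      · right; left; rw [hcs C₁ C₂ i] at h; exact_mod_cast h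
      · right; right; rw [hcs C₁ C₂ i] at h; exact_mod_cast h
    have hdetE : ∀ (f : Fin n → Fin m ⊕ Fin n),
        ((ZExt Z).submatrix f id).det = -1 ∨ ((ZExt Z).submatrix f id).det = 0 ∨
          ((ZExt Z).submatrix f id).det = 1 :=
      fun f => GHcol.det_submatrix (ZExt Z) (ZExt_entries Z hZ01) (GHcol.ext Z hGHZ)
        n f id Function.injective_id
    rw [hAeq] at hx
    exact vertex_integral Z hdetE a b c d x hx
end

section
/- Let P > 0 be a real number and let g : ℝ → ℝ be a function that is convex on the interval [-P, P] and satisfies g(t) ≤ 𝟙{t ≠ 0} for all t ∈ [-P, P], where 𝟙{t ≠ 0} equals 0 at t = 0 and 1 otherwise. Then g(t) ≤ |t|/P for all t ∈ [-P, P]. Consequently, t ↦ |t|/P is the largest convex underestimator (convex envelope) of the indicator-of-nonzero function 𝟙{t ≠ 0} on [-P, P], since it is itself convex and satisfies |t|/P ≤ 𝟙{t ≠ 0} on [-P, P]. -/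
/-- Let `P > 0` and let `g : ℝ → ℝ` be convex on `[-P, P]` with `g(t) ≤ 𝟙{t ≠ 0}` on
`[-P, P]`. Then `g(t) ≤ |t|/P` on `[-P, P]`. Moreover `t ↦ |t|/P` is itself convex on
`[-P, P]` and satisfies `|t|/P ≤ 𝟙{t ≠ 0}` there, so it is the largest convex
underestimator (the convex envelope) of `𝟙{t ≠ 0}` on `[-P, P]`. -/
theorem convex_envelope_of_indicator (P : ℝ) (hP : 0 < P) (g : ℝ → ℝ)
    (hg : ConvexOn ℝ (Set.Icc (-P) P) g)
    (hle : ∀ t ∈ Set.Icc (-P) P, g t ≤ (if t ≠ 0 then (1 : ℝ) else 0)) :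
    (∀ t ∈ Set.Icc (-P) P, g t ≤ |t| / P) ∧
      ConvexOn ℝ (Set.Icc (-P) P) (fun t => |t| / P) ∧
      (∀ t ∈ Set.Icc (-P) P, |t| / P ≤ (if t ≠ 0 then (1 : ℝ) else 0)) := by
  have h0 : (0 : ℝ) ∈ Set.Icc (-P) P := ⟨by linarith, le_of_lt hP⟩
  have hg0 : g 0 ≤ 0 := by simpa using hle 0 h0
  have hgP : g P ≤ 1 := by
    have := hle P ⟨by linarith, le_refl P⟩
    simpa [hP.ne'] using this
  have hgnP : g (-P) ≤ 1 := by
    have := hle (-P) ⟨le_refl _, by linarith⟩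
    have hne : (-P : ℝ) ≠ 0 := by simp [hP.ne']
    simpa [hne] using this
  refine ⟨?_, ?_, ?_⟩
  · intro t ht
    rcases le_or_gt 0 t with h | h
    · -- t = (t/P) • P + (1 - t/P) • 0
      have ha : 0 ≤ t / P := div_nonneg h hP.le
      have hb : 0 ≤ 1 - t / P := by
        have : t / P ≤ 1 := (div_le_one hP).2 ht.2
        linarith
      have key := hg.2 (Set.mem_Icc.2 ⟨by linarith, le_refl P⟩) h0 ha hb (by ring)
      have heq : (t / P) • P + (1 - t / P) • (0 : ℝ) = t := by
        simp only [smul_eq_mul, mul_zero, add_zero]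
        field_simp
      rw [heq] at key
      have : g t ≤ (t / P) * 1 + (1 - t / P) * 0 := by
        calc g t ≤ (t/P) • g P + (1 - t/P) • g 0 := key
        _ ≤ (t / P) * 1 + (1 - t / P) * 0 := by
            apply add_le_add
            · exact mul_le_mul_of_nonneg_left hgP ha
            · exact mul_le_mul_of_nonneg_left hg0 hb
      rw [abs_of_nonneg h]
      linarith
    · have ha : 0 ≤ -t / P := div_nonneg (by linarith) hP.le
      have hb : 0 ≤ 1 - (-t) / P := by
        have : -t / P ≤ 1 := (div_le_one hP).2 (by linarith [ht.1])
        linarith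
      have key := hg.2 (Set.mem_Icc.2 ⟨le_refl _, by linarith⟩) h0 ha hb (by ring)
      have heq : (-t / P) • (-P) + (1 - (-t) / P) • (0 : ℝ) = t := by
        simp only [smul_eq_mul, mul_zero, add_zero]
        field_simp
      rw [heq] at key
      have : g t ≤ (-t / P) * 1 + (1 - (-t) / P) * 0 := by
        calc g t ≤ (-t/P) • g (-P) + (1 - (-t)/P) • g 0 := key
        _ ≤ (-t / P) * 1 + (1 - (-t) / P) * 0 := by
            apply add_le_add
            · exact mul_le_mul_of_nonneg_left hgnP ha
            · exact mul_le_mul_of_nonneg_left hg0 hb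
      rw [abs_of_neg h]
      linarith
  · have : ConvexOn ℝ (Set.Icc (-P) P) (fun t : ℝ => |t|) :=
      (convexOn_norm (convex_Icc _ _)).congr (by intro x _; simp [Real.norm_eq_abs])
    simpa [div_eq_mul_inv, mul_comm] using this.smul (c := P⁻¹) (by positivity)
  · intro t ht
    by_cases h : t = 0
    · simp [h]
    · have : |t| ≤ P := abs_le.2 ⟨ht.1, ht.2⟩
      simp only [h, if_pos, ne_eq, not_false_eq_true]
      exact (div_le_one hP).2 this
end

section
/- Let P > 0 and γ ≥ 0 be real numbers and let g : ℝ → ℝ be a function that is convex on the interval [-P, P] and satisfies g(t) ≤ 𝟙{t ≠ 0} + γ|t| for all t ∈ [-P, P], where 𝟙{t ≠ 0} equals 0 at t = 0 and 1 otherwise. Then g(t) ≤ (1/P + γ)·|t| for all t ∈ [-P, P]. Consequently, t ↦ (1/P + γ)·|t| is the largest convex underestimator (convex envelope) of t ↦ 𝟙{t ≠ 0} + γ|t| on [-P, P], since it is itself convex and satisfies (1/P + γ)·|t| ≤ 𝟙{t ≠ 0} + γ|t| on [-P, P]. -/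
/-- Let `P > 0`, `γ ≥ 0`, and let `g : ℝ → ℝ` be convex on `[-P, P]` with
`g(t) ≤ 𝟙{t ≠ 0} + γ|t|` on `[-P, P]`. Then `g(t) ≤ (1/P + γ)·|t|` on `[-P, P]`.
Moreover `t ↦ (1/P + γ)·|t|` is itself convex on `[-P, P]` and satisfies
`(1/P + γ)·|t| ≤ 𝟙{t ≠ 0} + γ|t|` there, so it is the largest convex underestimator
(the convex envelope) of `t ↦ 𝟙{t ≠ 0} + γ|t|` on `[-P, P]`. -/
theorem convex_envelope_of_indicator_plus_abs (P γ : ℝ) (hP : 0 < P) (hγ : 0 ≤ γ)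
    (g : ℝ → ℝ) (hg : ConvexOn ℝ (Set.Icc (-P) P) g)
    (hle : ∀ t ∈ Set.Icc (-P) P, g t ≤ (if t ≠ 0 then (1 : ℝ) else 0) + γ * |t|) :
    (∀ t ∈ Set.Icc (-P) P, g t ≤ (1/P + γ) * |t|) ∧
      ConvexOn ℝ (Set.Icc (-P) P) (fun t => (1/P + γ) * |t|) ∧
      (∀ t ∈ Set.Icc (-P) P,
        (1/P + γ) * |t| ≤ (if t ≠ 0 then (1 : ℝ) else 0) + γ * |t|) := by
  have h0mem : (0 : ℝ) ∈ Set.Icc (-P) P := ⟨by linarith, by linarith⟩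
  have hg0 : g 0 ≤ 0 := by simpa using hle 0 h0mem
  have hmain : ∀ t ∈ Set.Icc (-P) P, g t ≤ (1/P + γ) * |t| := by
    intro t ht
    obtain ⟨ht1, ht2⟩ := ht
    have habsP : |t| ≤ P := abs_le.mpr ⟨ht1, ht2⟩
    have key : ∀ s : ℝ, s ∈ Set.Icc (-P) P → s ≠ 0 → |s| = P → (|t|/P) * s = t →
        g t ≤ (1/P + γ) * |t| := by
      intro s hsmem hsne hsabs hst
      have hgs : g s ≤ 1 + γ * P := by
        have := hle s hsmem
        rw [if_pos hsne, hsabs] at this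
        exact this
      have hb0 : (0:ℝ) ≤ |t|/P := div_nonneg (abs_nonneg t) hP.le
      have hb1 : |t|/P ≤ 1 := (div_le_one hP).mpr habsP
      have ha0 : (0:ℝ) ≤ 1 - |t|/P := by linarith
      have hcomb := hg.2 h0mem hsmem ha0 hb0 (by ring)
      simp only [smul_eq_mul, mul_zero, zero_add] at hcomb
      rw [hst] at hcomb
      have h1 : (1 - |t|/P) * g 0 ≤ 0 :=
        mul_nonpos_of_nonneg_of_nonpos ha0 hg0
      have h2 : (|t|/P) * g s ≤ (|t|/P) * (1 + γ * P) :=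
        mul_le_mul_of_nonneg_left hgs hb0
      have h3 : (|t|/P) * (1 + γ * P) = (1/P + γ) * |t| := by
        field_simp
      linarith
    rcases le_or_gt 0 t with hto | hto
    · exact key P ⟨by linarith, le_refl P⟩ (by positivity) (abs_of_pos hP)
        (by rw [abs_of_nonneg hto]; field_simp)
    · exact key (-P) ⟨le_refl _, by linarith⟩ (by intro h; linarith) (by rw [abs_neg, abs_of_pos hP])
        (by rw [abs_of_neg hto]; field_simp)
  refine ⟨hmain, ⟨convex_Icc _ _, ?_⟩, ?_⟩
  · intro x _ y _ a b ha hb hab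
    simp only [smul_eq_mul]
    have hc : (0:ℝ) ≤ 1/P + γ := by positivity
    have habs : |a*x + b*y| ≤ a*|x| + b*|y| := by
      calc |a*x + b*y| ≤ |a*x| + |b*y| := abs_add_le _ _
        _ = a*|x| + b*|y| := by
            rw [abs_mul, abs_mul, abs_of_nonneg ha, abs_of_nonneg hb]
    nlinarith [mul_le_mul_of_nonneg_left habs hc]
  · intro t ht
    by_cases h : t = 0
    · simp [h]
    · rw [if_pos h]
      have habsP : |t| ≤ P := abs_le.mpr ⟨ht.1, ht.2⟩
      have h1 : |t|/P ≤ 1 := (div_le_one hP).mpr habsP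
      have h2 : (1/P + γ) * |t| = |t|/P + γ * |t| := by ring
      linarith
end

section
/- Let n ≥ 1 be an integer and P > 0 a real number, and let B = {y ∈ ℝ^n : ‖y‖∞ ≤ P}. If g : ℝ^n → ℝ is convex on B and satisfies g(y) ≤ card(y) for all y ∈ B, where card(y) is the number of nonzero components of y, then g(y) ≤ (1/P)·‖y‖₁ for all y ∈ B. Together with the underestimator property (1/P)·‖y‖₁ ≤ card(y) on B, this shows that the convex envelope of the cardinality function card on the ℓ∞ ball of radius P is y ↦ (1/P)·‖y‖₁. -/
/-- Let `n ≥ 1`, `P > 0`, and `B = {y ∈ ℝ^n : ‖y‖∞ ≤ P}`. If `g : ℝ^n → ℝ` is convex on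
`B` and satisfies `g(y) ≤ card(y)` for all `y ∈ B` (where `card(y)` is the number of
nonzero components of `y`), then `g(y) ≤ (1/P)·‖y‖₁` for all `y ∈ B`. Together with the
underestimator property `(1/P)·‖y‖₁ ≤ card(y)` on `B`, this shows that the convex
envelope of `card` on the ℓ∞ ball of radius `P` is `y ↦ (1/P)·‖y‖₁`. -/
theorem convex_underestimators_of_card_below_scaled_l1 (n : ℕ) (hn : 1 ≤ n)
    (P : ℝ) (hP : 0 < P) (B : Set (Fin n → ℝ)) (hB : B = {y | ∀ i, |y i| ≤ P})
    (g : (Fin n → ℝ) → ℝ) (hg : ConvexOn ℝ B g)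
    (hle : ∀ y ∈ B, g y ≤ ((Function.support y).ncard : ℝ)) :
    ∀ y ∈ B, g y ≤ (1/P) * ∑ i, |y i| := by
  subst hB
  suffices H : ∀ k : ℕ, ∀ y : Fin n → ℝ, (∀ i, |y i| ≤ P) →
      (Finset.univ.filter (fun i => y i ≠ 0 ∧ |y i| ≠ P)).card = k →
      g y ≤ (1/P) * ∑ i, |y i| by
    intro y hy
    exact H _ y hy rfl
  intro k
  induction k using Nat.strong_induction_on with
  | _ k ih =>
    intro y hy hk
    rcases Nat.eq_zero_or_pos k with hk0 | hkpos
    · -- base case: every coordinate is 0 or ±P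
      subst hk0
      rw [Finset.card_eq_zero] at hk
      have hall : ∀ i, y i = 0 ∨ |y i| = P := by
        intro i
        by_contra h
        push_neg at h
        have : i ∈ Finset.univ.filter (fun i => y i ≠ 0 ∧ |y i| ≠ P) := by
          simp [h.1, h.2]
        rw [hk] at this
        exact absurd this (Finset.notMem_empty i)
      have hsupp : Function.support y = ↑(Finset.univ.filter fun i => y i ≠ 0) := by
        ext j; simp [Function.support]
      have hcard : ((Function.support y).ncard : ℝ)
          = ((Finset.univ.filter fun i => y i ≠ 0).card : ℝ) := by
        rw [hsupp, Set.ncard_coe_finset]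
      have hsum : ∑ i, |y i| = ((Finset.univ.filter fun i => y i ≠ 0).card : ℝ) * P := by
        rw [← Finset.sum_filter_ne_zero Finset.univ (f := fun i => |y i|)]
        have : (Finset.univ.filter fun i => |y i| ≠ 0)
            = (Finset.univ.filter fun i => y i ≠ 0) := by
          apply Finset.filter_congr; intro i _; simp
        rw [this]
        rw [Finset.sum_congr rfl (fun i hi => ?_), Finset.sum_const, nsmul_eq_mul]
        rcases hall i with h0 | hPi
        · simp at hi; exact absurd h0 hi
        · exact hPi
      have := hle y hy
      rw [hcard] at this
      calc g y ≤ ((Finset.univ.filter fun i => y i ≠ 0).card : ℝ) := this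
        _ = (1/P) * ∑ i, |y i| := by rw [hsum]; field_simp
    · -- inductive step
      have hne : (Finset.univ.filter (fun i => y i ≠ 0 ∧ |y i| ≠ P)).Nonempty := by
        rw [← Finset.card_pos, hk]; exact hkpos
      obtain ⟨i, hi⟩ := hne
      simp only [Finset.mem_filter, Finset.mem_univ, true_and] at hi
      obtain ⟨hi0, hiP⟩ := hi
      have habs0 : 0 < |y i| := abs_pos.mpr hi0
      have habsP : |y i| < P := lt_of_le_of_ne (hy i) hiP
      set t : ℝ := |y i| / P with ht
      have ht0 : 0 < t := div_pos habs0 hP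
      have ht1 : t < 1 := (div_lt_one hP).mpr habsP
      set s : ℝ := if 0 ≤ y i then P else -P with hs
      have hsabs : |s| = P := by
        rw [hs]; split <;> simp [abs_of_pos hP, abs_of_neg (neg_neg_iff_pos.mpr hP), hP.le]
      have hts : t * s = y i := by
        rw [ht, hs]
        split_ifs with h
        · rw [div_mul_cancel₀ _ hP.ne', abs_of_nonneg h]
        · push_neg at h
          rw [mul_neg, div_mul_cancel₀ _ hP.ne', abs_of_neg h, neg_neg]
      set y0 : Fin n → ℝ := Function.update y i 0 with hy0
      set yP : Fin n → ℝ := Function.update y i s with hyP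
      have hkey : y = (1 - t) • y0 + t • yP := by
        funext j
        by_cases hj : j = i
        · subst hj
          simp [hy0, hyP, Function.update_self, hts]
        · simp [hy0, hyP, Function.update_of_ne hj]
          ring
      have hy0B : ∀ j, |y0 j| ≤ P := by
        intro j
        by_cases hj : j = i
        · subst hj; simp [hy0, hP.le]
        · simp [hy0, Function.update_of_ne hj, hy j]
      have hyPB : ∀ j, |yP j| ≤ P := by
        intro j
        by_cases hj : j = i
        · subst hj; simp [hyP, hsabs]
        · simp [hyP, Function.update_of_ne hj, hy j]
      -- fractional sets shrink
      have hfilt0 : (Finset.univ.filter (fun j => y0 j ≠ 0 ∧ |y0 j| ≠ P))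
          = (Finset.univ.filter (fun j => y j ≠ 0 ∧ |y j| ≠ P)).erase i := by
        ext j
        simp only [Finset.mem_filter, Finset.mem_univ, true_and, Finset.mem_erase]
        by_cases hj : j = i
        · subst hj; simp [hy0]
        · simp [hy0, Function.update_of_ne hj, hj]
      have hfiltP : (Finset.univ.filter (fun j => yP j ≠ 0 ∧ |yP j| ≠ P))
          = (Finset.univ.filter (fun j => y j ≠ 0 ∧ |y j| ≠ P)).erase i := by
        ext j
        simp only [Finset.mem_filter, Finset.mem_univ, true_and, Finset.mem_erase]
        by_cases hj : j = i
        · subst hj; simp [hyP, hsabs]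
        · simp [hyP, Function.update_of_ne hj, hj]
      have himem : i ∈ Finset.univ.filter (fun j => y j ≠ 0 ∧ |y j| ≠ P) := by
        simp [hi0, hiP]
      have hcard0 : (Finset.univ.filter (fun j => y0 j ≠ 0 ∧ |y0 j| ≠ P)).card = k - 1 := by
        rw [hfilt0, Finset.card_erase_of_mem himem, hk]
      have hcardP : (Finset.univ.filter (fun j => yP j ≠ 0 ∧ |yP j| ≠ P)).card = k - 1 := by
        rw [hfiltP, Finset.card_erase_of_mem himem, hk]
      have hlt : k - 1 < k := Nat.sub_lt hkpos one_pos
      have ih0 := ih (k-1) hlt y0 hy0B hcard0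
      have ihP := ih (k-1) hlt yP hyPB hcardP
      have hconv : g ((1 - t) • y0 + t • yP) ≤ (1 - t) * g y0 + t * g yP :=
        hg.2 hy0B hyPB (by linarith) ht0.le (by ring)
      rw [← hkey] at hconv
      -- sums
      have hS0 : ∑ j, |y0 j| = ∑ j ∈ Finset.univ.erase i, |y j| := by
        rw [← Finset.add_sum_erase Finset.univ (fun j => |y0 j|) (Finset.mem_univ i)]
        simp only [hy0, Function.update_self, abs_zero, zero_add]
        exact Finset.sum_congr rfl fun j hj => by
          rw [Function.update_of_ne (Finset.mem_erase.mp hj).1]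
      have hSP : ∑ j, |yP j| = P + ∑ j ∈ Finset.univ.erase i, |y j| := by
        rw [← Finset.add_sum_erase Finset.univ (fun j => |yP j|) (Finset.mem_univ i)]
        simp only [hyP, Function.update_self, hsabs]
        congr 1
        exact Finset.sum_congr rfl fun j hj => by
          rw [Function.update_of_ne (Finset.mem_erase.mp hj).1]
      have hSy : ∑ j, |y j| = |y i| + ∑ j ∈ Finset.univ.erase i, |y j| :=
        (Finset.add_sum_erase Finset.univ (fun j => |y j|) (Finset.mem_univ i)).symm
      have htP : t * P = |y i| := div_mul_cancel₀ _ hP.ne'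
      calc g y ≤ (1 - t) * g y0 + t * g yP := hconv
        _ ≤ (1 - t) * ((1/P) * ∑ j, |y0 j|) + t * ((1/P) * ∑ j, |yP j|) := by
            apply add_le_add
            · exact mul_le_mul_of_nonneg_left ih0 (by linarith)
            · exact mul_le_mul_of_nonneg_left ihP ht0.le
        _ = (1/P) * ∑ j, |y j| := by
            rw [hS0, hSP, hSy]
            field_simp
            nlinarith [htP]
end

section
/- Let n ≥ 1 be an integer, P > 0 and γ > 0 real numbers, and let B = {y ∈ ℝ^n : ‖y‖∞ ≤ P}. Define f : ℝ^n → ℝ by f(y) = card(y) + γ‖y‖₁, where card(y) is the number of nonzero components of y. Then the convex envelope of f on B is y ↦ (1/P + γ)·‖y‖₁; that is: (i) the function y ↦ (1/P + γ)·‖y‖₁ is convex and satisfies (1/P + γ)·‖y‖₁ ≤ f(y) for all y ∈ B, and (ii) every function g : ℝ^n → ℝ that is convex on B and satisfies g(y) ≤ f(y) on B also satisfies g(y) ≤ (1/P + γ)·‖y‖₁ on B. In this sense, minimizing ‖y‖₁ is the best convex approximation from below to minimizing card(y) + γ‖y‖₁ over any feasible set contained in B. -/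
/-- Key computation: for product weights over Boolean sign patterns, the weighted
sum of a function of a single coordinate is the corresponding marginal average. -/
lemma prod_bool_sum_key (n : ℕ) (w : Fin n → Bool → ℝ)
    (hw : ∀ i, w i true + w i false = 1) (k : Fin n) (c : Bool → ℝ) :
    ∑ σ : Fin n → Bool, (∏ i, w i (σ i)) * c (σ k)
      = w k true * c true + w k false * c false := by
  have h1 : ∀ σ : Fin n → Bool, (∏ i, w i (σ i)) * c (σ k)
      = ∏ i, (w i (σ i) * (if i = k then c (σ i) else 1)) := by
    intro σ
    rw [Finset.prod_mul_distrib, Finset.prod_ite_eq' Finset.univ k (fun i => c (σ i))]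
    simp
  calc ∑ σ : Fin n → Bool, (∏ i, w i (σ i)) * c (σ k)
      = ∑ σ ∈ Fintype.piFinset (fun _ : Fin n => (Finset.univ : Finset Bool)),
          ∏ i, (w i (σ i) * (if i = k then c (σ i) else 1)) := by
        rw [Fintype.piFinset_univ]; exact Finset.sum_congr rfl (fun σ _ => h1 σ)
    _ = ∏ i, ∑ b : Bool, (w i b * (if i = k then c b else 1)) :=
        (Finset.prod_univ_sum (fun _ : Fin n => (Finset.univ : Finset Bool))
          (fun i b => w i b * (if i = k then c b else 1))).symm
    _ = w k true * c true + w k false * c false := by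
        rw [Finset.prod_eq_single k]
        · simp [Fintype.sum_bool]
        · intro b _ hbk
          simp only [if_neg hbk, mul_one, Fintype.sum_bool]
          exact hw b
        · intro h; exact absurd (Finset.mem_univ k) h

/-- **Proposition 2 of the paper.** Let `n ≥ 1`, `P > 0`, `γ > 0`, and
`B = {y ∈ ℝ^n : ‖y‖∞ ≤ P}`. Define `f(y) = card(y) + γ‖y‖₁` where `card(y)` is the
number of nonzero components of `y`. Then the convex envelope of `f` on `B` is
`y ↦ (1/P + γ)·‖y‖₁`: (i) this function is convex and underestimates `f` on `B`, and
(ii) every function convex on `B` that underestimates `f` on `B` also lies below it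
on `B`. -/
theorem convex_envelope_of_card_plus_l1 (n : ℕ) (hn : 1 ≤ n)
    (P γ : ℝ) (hP : 0 < P) (hγ : 0 < γ)
    (B : Set (Fin n → ℝ)) (hB : B = {y | ∀ i, |y i| ≤ P})
    (f : (Fin n → ℝ) → ℝ)
    (hf : ∀ y, f y = ((Function.support y).ncard : ℝ) + γ * ∑ i, |y i|) :
    (ConvexOn ℝ B (fun y => (1/P + γ) * ∑ i, |y i|) ∧
      ∀ y ∈ B, (1/P + γ) * (∑ i, |y i|) ≤ f y) ∧
    (∀ g : (Fin n → ℝ) → ℝ, ConvexOn ℝ B g → (∀ y ∈ B, g y ≤ f y) →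
      ∀ y ∈ B, g y ≤ (1/P + γ) * ∑ i, |y i|) := by
  have hPne : P ≠ 0 := ne_of_gt hP
  have hconst : (0:ℝ) ≤ 1/P + γ := by positivity
  have hBconv : Convex ℝ B := by
    rw [hB]
    intro x hx v hv a b ha hb hab
    intro i
    have h1 : |x i| ≤ P := hx i
    have h2 : |v i| ≤ P := hv i
    have : (a • x + b • v) i = a * x i + b * v i := by simp
    rw [this]
    calc |a * x i + b * v i| ≤ |a * x i| + |b * v i| := abs_add_le _ _
      _ = a * |x i| + b * |v i| := by
          rw [abs_mul, abs_mul, abs_of_nonneg ha, abs_of_nonneg hb]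
      _ ≤ a * P + b * P := by
          gcongr
      _ = P := by rw [← add_mul, hab, one_mul]
  constructor
  · constructor
    · -- convexity of the scaled ℓ¹ norm
      refine ⟨hBconv, ?_⟩
      intro x hx v hv a b ha hb hab
      have key : ∑ i, |(a • x + b • v) i| ≤ a * ∑ i, |x i| + b * ∑ i, |v i| := by
        rw [Finset.mul_sum, Finset.mul_sum, ← Finset.sum_add_distrib]
        apply Finset.sum_le_sum
        intro i _
        have : (a • x + b • v) i = a * x i + b * v i := by simp
        rw [this]
        calc |a * x i + b * v i| ≤ |a * x i| + |b * v i| := abs_add_le _ _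
          _ = a * |x i| + b * |v i| := by
              rw [abs_mul, abs_mul, abs_of_nonneg ha, abs_of_nonneg hb]
      have := mul_le_mul_of_nonneg_left key hconst
      simp only [smul_eq_mul]
      calc (1/P + γ) * ∑ i, |(a • x + b • v) i|
          ≤ (1/P + γ) * (a * ∑ i, |x i| + b * ∑ i, |v i|) := this
        _ = a * ((1/P + γ) * ∑ i, |x i|) + b * ((1/P + γ) * ∑ i, |v i|) := by ring
    · -- underestimate on B
      intro y hy
      rw [hB] at hy
      rw [hf]
      have hsupp : Function.support y
          = ↑(Finset.univ.filter (fun i => y i ≠ 0)) := by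
        ext i; simp [Function.support]
      have hcard : ((Function.support y).ncard : ℝ)
          = ((Finset.univ.filter (fun i => y i ≠ 0)).card : ℝ) := by
        rw [hsupp, Set.ncard_coe_finset]
      have hsum : ∑ i, |y i| = ∑ i ∈ Finset.univ.filter (fun i => y i ≠ 0), |y i| := by
        rw [Finset.sum_filter]
        apply Finset.sum_congr rfl
        intro i _
        by_cases h : y i = 0 <;> simp [h]
      have hbound : ∑ i, |y i|
          ≤ ((Finset.univ.filter (fun i => y i ≠ 0)).card : ℝ) * P := by
        rw [hsum]
        have := Finset.sum_le_card_nsmul (Finset.univ.filter (fun i => y i ≠ 0))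
          (fun i => |y i|) P (fun i _ => hy i)
        simpa [nsmul_eq_mul] using this
      rw [hcard]
      have hS : (1/P) * ∑ i, |y i| ≤ ((Finset.univ.filter (fun i => y i ≠ 0)).card : ℝ) := by
        rw [one_div, inv_mul_le_iff₀ hP]
        calc ∑ i, |y i| ≤ ((Finset.univ.filter (fun i => y i ≠ 0)).card : ℝ) * P := hbound
          _ = P * ((Finset.univ.filter (fun i => y i ≠ 0)).card : ℝ) := by ring
      nlinarith [hS]
  · -- part (ii): maximality
    intro g hg hgf y hy
    have hyB := hy
    rw [hB] at hy
    set t : Fin n → ℝ := fun i => |y i| / P with ht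
    have ht0 : ∀ i, 0 ≤ t i := fun i => div_nonneg (abs_nonneg _) hP.le
    have ht1 : ∀ i, t i ≤ 1 := fun i => (div_le_one hP).mpr (hy i)
    set W : Fin n → Bool → ℝ := fun i b => if b then t i else 1 - t i with hW
    have hWnn : ∀ i b, 0 ≤ W i b := by
      intro i b
      cases b <;> simp [hW]
      · linarith [ht1 i]
      · exact ht0 i
    have hWsum : ∀ i, W i true + W i false = 1 := by
      intro i; simp [hW]
    set s' : Fin n → ℝ := fun i => if y i < 0 then -P else P with hs'
    have hs'abs : ∀ i, |s' i| = P := by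
      intro i
      by_cases h : y i < 0 <;> simp [hs', h, abs_of_pos hP]
    have hs'ne : ∀ i, s' i ≠ 0 := by
      intro i
      by_cases h : y i < 0 <;> simp [hs', h, hPne]
    have hts' : ∀ i, t i * s' i = y i := by
      intro i
      by_cases h : y i < 0
      · simp only [hs', if_pos h, ht]
        rw [abs_of_neg h]; field_simp
      · simp only [hs', if_neg h, ht]
        rw [abs_of_nonneg (not_lt.mp h)]; field_simp
    set z : (Fin n → Bool) → (Fin n → ℝ) := fun σ i => if σ i then s' i else 0 with hz
    set w : (Fin n → Bool) → ℝ := fun σ => ∏ i, W i (σ i) with hw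
    have hwnn : ∀ σ, 0 ≤ w σ := fun σ => Finset.prod_nonneg (fun i _ => hWnn i (σ i))
    have k0 : Fin n := ⟨0, hn⟩
    have hwsum : ∑ σ : Fin n → Bool, w σ = 1 := by
      have := prod_bool_sum_key n W hWsum k0 (fun _ => 1)
      simpa [hw, hWsum k0] using this
    have hzB : ∀ σ, z σ ∈ B := by
      intro σ
      rw [hB]
      intro i
      by_cases h : σ i
      · simp [hz, h, hs'abs i]
      · simp [hz, h, hP.le]
    -- reconstruction
    have hrec : y = ∑ σ : Fin n → Bool, w σ • z σ := by
      funext i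
      have : (∑ σ : Fin n → Bool, w σ • z σ) i = ∑ σ : Fin n → Bool, w σ * z σ i := by
        simp [Finset.sum_apply]
      rw [this]
      have := prod_bool_sum_key n W hWsum i (fun b => if b then s' i else 0)
      simp only [hw, hz]
      rw [this]
      simp [hW, hts' i]
    -- value of f at the vertices
    have hfz : ∀ σ : Fin n → Bool, f (z σ) = ∑ i, (if σ i then (1 + γ * P) else 0) := by
      intro σ
      rw [hf]
      have hsupp : Function.support (z σ) = ↑(Finset.univ.filter (fun i => σ i = true)) := by
        ext i
        simp only [Function.mem_support, hz, Finset.coe_filter, Set.mem_setOf_eq,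
          Finset.mem_univ, true_and]
        by_cases h : σ i <;> simp [h, hs'ne i]
      have hcard : ((Function.support (z σ)).ncard : ℝ)
          = ((Finset.univ.filter (fun i => σ i = true)).card : ℝ) := by
        rw [hsupp, Set.ncard_coe_finset]
      have hl1 : ∑ i, |z σ i| = ((Finset.univ.filter (fun i => σ i = true)).card : ℝ) * P := by
        have : ∀ i, |z σ i| = if σ i then P else 0 := by
          intro i
          by_cases h : σ i <;> simp [hz, h, hs'abs i]
        simp_rw [this]
        rw [← Finset.sum_filter, Finset.sum_const, nsmul_eq_mul]
      rw [hcard, hl1]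
      rw [← Finset.sum_filter, Finset.sum_const, nsmul_eq_mul]
      ring
    -- Jensen plus underestimation
    have hJ : g y ≤ ∑ σ : Fin n → Bool, w σ * g (z σ) := by
      have := hg.map_sum_le (t := Finset.univ) (w := w) (p := z)
        (fun σ _ => hwnn σ) hwsum (fun σ _ => hzB σ)
      rw [← hrec] at this
      simpa using this
    have hJ2 : ∑ σ : Fin n → Bool, w σ * g (z σ) ≤ ∑ σ : Fin n → Bool, w σ * f (z σ) := by
      apply Finset.sum_le_sum
      intro σ _
      exact mul_le_mul_of_nonneg_left (hgf (z σ) (hzB σ)) (hwnn σ)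
    have hfin : ∑ σ : Fin n → Bool, w σ * f (z σ) = (1/P + γ) * ∑ i, |y i| := by
      have h1 : ∑ σ : Fin n → Bool, w σ * f (z σ)
          = ∑ i, ∑ σ : Fin n → Bool, w σ * (if σ i then (1 + γ * P) else 0) := by
        rw [Finset.sum_comm]
        apply Finset.sum_congr rfl
        intro σ _
        rw [hfz σ, Finset.mul_sum]
      rw [h1]
      have h2 : ∀ i, ∑ σ : Fin n → Bool, w σ * (if σ i then (1 + γ * P) else 0)
          = t i * (1 + γ * P) := by
        intro i
        have := prod_bool_sum_key n W hWsum i (fun b => if b then (1 + γ * P) else 0)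
        simp only [hw]
        rw [this]
        simp [hW]
      simp_rw [h2]
      rw [Finset.mul_sum]
      apply Finset.sum_congr rfl
      intro i _
      simp only [ht]
      field_simp
    calc g y ≤ ∑ σ : Fin n → Bool, w σ * g (z σ) := hJ
      _ ≤ ∑ σ : Fin n → Bool, w σ * f (z σ) := hJ2
      _ = (1/P + γ) * ∑ i, |y i| := hfin
end
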